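/- Let F be a field, G a finite group, and V a G-module. Then topdeg F[V]_G ≤ (dim_F V) · topdeg F[V_reg]_G, where V_reg = FG is the regular representation of G. -/

import Mathlib

open MvPolynomial

variable {F G ι : Type*} [Field F] [Group G] [Fintype ι] [DecidableEq ι]

/-- The (left) action of a group element `σ` on the polynomial algebra
`F[V] = S(V^*)` presented as `MvPolynomial ι F`, for a matrix representation
`ρ : G →* GL(ι, F)` of `G` on `V = (ι → F)`.  It is given by `σ • f = f ∘ σ⁻¹`,
i.e. by linear substitution of the variables using the matrix of `ρ σ⁻¹`. -/
noncomputable def polyAct (ρ : G →* (Matrix ι ι F)ˣ) (σ : G)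
    (f : MvPolynomial ι F) : MvPolynomial ι F :=
  MvPolynomial.aeval
    (fun i => ∑ j, ((ρ σ⁻¹ : Matrix ι ι F) i j) • (MvPolynomial.X j : MvPolynomial ι F)) f

/-- A polynomial is invariant if it is fixed by the action of every group element. -/
def IsInv (ρ : G →* (Matrix ι ι F)ˣ) (f : MvPolynomial ι F) : Prop :=
  ∀ σ : G, polyAct ρ σ f = f

/-- The Hilbert ideal: the ideal of `F[V]` generated by the homogeneous invariants
of positive degree. -/
noncomputable def hilbertIdeal (ρ : G →* (Matrix ι ι F)ˣ) : Ideal (MvPolynomial ι F) :=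
  Ideal.span {f : MvPolynomial ι F | (∃ d, 0 < d ∧ f.IsHomogeneous d) ∧ IsInv ρ f}

/-- The top degree of the coinvariant algebra `F[V]_G = F[V]/(Hilbert ideal)`:
the largest degree `d` such that the degree-`d` homogeneous component of `F[V]_G`
is nonzero; since the Hilbert ideal is homogeneous this is the largest `d` for
which some homogeneous polynomial of degree `d` is not in the Hilbert ideal. -/
noncomputable def topDeg (ρ : G →* (Matrix ι ι F)ˣ) : ℕ :=
  sSup {d : ℕ | ∃ f : MvPolynomial ι F, f.IsHomogeneous d ∧ f ∉ hilbertIdeal ρ}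

/-- The dimension of the coinvariant algebra `F[V]_G` as an `F`-vector space. -/
noncomputable def coinvDim (ρ : G →* (Matrix ι ι F)ˣ) : ℕ :=
  Module.finrank F (MvPolynomial ι F ⧸ hilbertIdeal ρ)

/-- The permutation-matrix representation of the symmetric group on `ι`,
acting on `V = (ι → F)` by permuting coordinates: `(σ • v) i = v (σ⁻¹ i)`. -/
noncomputable def permGL (F : Type*) [Field F] {ι : Type*} [Fintype ι] [DecidableEq ι] :
    Equiv.Perm ι →* (Matrix ι ι F)ˣ where
  toFun e :=
    { val := (e⁻¹.toPEquiv.toMatrix : Matrix ι ι F)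
      inv := (e.toPEquiv.toMatrix : Matrix ι ι F)
      val_inv := by
        rw [← PEquiv.toMatrix_trans, ← Equiv.toPEquiv_trans]
        simp [Equiv.Perm.one_def, Equiv.toPEquiv_refl, Equiv.Perm.inv_def]
      inv_val := by
        rw [← PEquiv.toMatrix_trans, ← Equiv.toPEquiv_trans]
        simp [Equiv.Perm.one_def, Equiv.toPEquiv_refl, Equiv.Perm.inv_def] }
  map_one' := by
    ext i j
    simp [Equiv.Perm.one_def, Equiv.toPEquiv_refl, Matrix.one_apply]
  map_mul' := by
    intro e f
    apply Units.ext
    show ((e * f)⁻¹).toPEquiv.toMatrix = _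
    simp only [Units.val_mul]
    rw [← PEquiv.toMatrix_trans, ← Equiv.toPEquiv_trans]
    congr 1

/-- The (left) regular representation of a finite group `G`, as permutation
matrices indexed by `G`. -/
noncomputable def regRep (F : Type*) (G : Type*) [Field F] [Group G] [Fintype G]
    [DecidableEq G] : G →* (Matrix G G F)ˣ :=
  (permGL F).comp (MulAction.toPermHom G G)

section AuxBasic

variable {F G ι : Type*} [Field F] [Group G] [Fintype ι] [DecidableEq ι]

/-- `polyAct` as an `F`-algebra homomorphism. -/
noncomputable def polyActHom (ρ : G →* (Matrix ι ι F)ˣ) (σ : G) :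
    MvPolynomial ι F →ₐ[F] MvPolynomial ι F :=
  MvPolynomial.aeval
    (fun i => ∑ j, ((ρ σ⁻¹ : Matrix ι ι F) i j) • (MvPolynomial.X j : MvPolynomial ι F))

lemma polyAct_eq_hom (ρ : G →* (Matrix ι ι F)ˣ) (σ : G) (f : MvPolynomial ι F) :
    polyAct ρ σ f = polyActHom ρ σ f := rfl

lemma polyActHom_X (ρ : G →* (Matrix ι ι F)ˣ) (σ : G) (i : ι) :
    polyActHom ρ σ (X i) = ∑ j, ((ρ σ⁻¹ : Matrix ι ι F) i j) • (X j : MvPolynomial ι F) :=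
  aeval_X _ i

lemma polyActHom_comp (ρ : G →* (Matrix ι ι F)ˣ) (σ τ : G) :
    (polyActHom ρ σ).comp (polyActHom ρ τ) = polyActHom ρ (σ * τ) := by
  apply algHom_ext
  intro i
  rw [AlgHom.comp_apply, polyActHom_X, polyActHom_X, map_sum]
  simp_rw [map_smul, polyActHom_X, Finset.smul_sum, smul_smul]
  rw [Finset.sum_comm]
  refine Finset.sum_congr rfl fun k _ => ?_
  rw [← Finset.sum_smul]
  congr 1
  rw [← Matrix.mul_apply, ← Units.val_mul, ← map_mul]
  rw [mul_inv_rev]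

lemma polyAct_polyAct (ρ : G →* (Matrix ι ι F)ˣ) (σ τ : G) (f : MvPolynomial ι F) :
    polyAct ρ σ (polyAct ρ τ f) = polyAct ρ (σ * τ) f := by
  simp only [polyAct_eq_hom]
  exact DFunLike.congr_fun (polyActHom_comp ρ σ τ) f

lemma polyActHom_one (ρ : G →* (Matrix ι ι F)ˣ) :
    polyActHom ρ (1 : G) = AlgHom.id F (MvPolynomial ι F) := by
  apply algHom_ext
  intro i
  rw [polyActHom_X]
  simp [inv_one, map_one, Matrix.one_apply, ite_smul, Finset.sum_ite_eq]

lemma polyAct_one (ρ : G →* (Matrix ι ι F)ˣ) (f : MvPolynomial ι F) :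
    polyAct ρ 1 f = f := by
  rw [polyAct_eq_hom, polyActHom_one]; rfl

/-- For a permutation representation, `polyAct` is just renaming of variables. -/
lemma polyActHom_perm {κ : Type*} [Fintype κ] [DecidableEq κ]
    (π : G →* Equiv.Perm κ) (σ : G) :
    polyActHom ((permGL F).comp π) σ =
      (rename (π σ) : MvPolynomial κ F →ₐ[F] MvPolynomial κ F) := by
  apply algHom_ext
  intro j
  rw [polyActHom_X, rename_X]
  have hm : (((permGL F).comp π) σ⁻¹ : (Matrix κ κ F)ˣ).val
      = ((π σ).toPEquiv.toMatrix : Matrix κ κ F) := by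
    show (permGL F (π σ⁻¹)).val = _
    have : (π σ⁻¹)⁻¹ = π σ := by rw [← map_inv, inv_inv]
    show ((π σ⁻¹)⁻¹.toPEquiv.toMatrix : Matrix κ κ F) = _
    rw [this]
  rw [hm]
  simp [PEquiv.toMatrix_apply, Equiv.toPEquiv_apply, ite_smul, Finset.sum_ite_eq]

lemma polyAct_perm {κ : Type*} [Fintype κ] [DecidableEq κ]
    (π : G →* Equiv.Perm κ) (σ : G) (f : MvPolynomial κ F) :
    polyAct ((permGL F).comp π) σ f = rename (π σ) f := by
  rw [polyAct_eq_hom, polyActHom_perm]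

end AuxBasic
section AuxReg

variable {F G : Type*} [Field F] [Group G] [Fintype G] [DecidableEq G]

lemma polyAct_regRep (σ : G) (f : MvPolynomial G F) :
    polyAct (regRep F G) σ f = rename (MulAction.toPermHom G G σ) f :=
  polyAct_perm (MulAction.toPermHom G G) σ f

lemma isInv_esymm (k : ℕ) : IsInv (regRep F G) (esymm G F k) := by
  intro σ
  rw [polyAct_regRep]
  exact esymm_isSymmetric G F k _

lemma esymm_isHomog (k : ℕ) : (esymm G F k).IsHomogeneous k := by
  apply MvPolynomial.IsHomogeneous.sum
  intro t ht
  have hc : t.card = k := (Finset.mem_powersetCard.mp ht).2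
  have := MvPolynomial.IsHomogeneous.prod t (fun i => (X i : MvPolynomial G F)) (fun _ => 1)
    (fun i _ => isHomogeneous_X F i)
  simpa [hc] using this

lemma esymm_mem (k : ℕ) (hk : 0 < k) : esymm G F k ∈ hilbertIdeal (regRep F G) :=
  Ideal.subset_span ⟨⟨k, hk, esymm_isHomog k⟩, isInv_esymm k⟩

lemma X_pow_card_mem (g : G) :
    (X g : MvPolynomial G F) ^ (Fintype.card G) ∈ hilbertIdeal (regRep F G) := by
  set n := Fintype.card G with hn
  have hV := congrArg (Polynomial.eval (-(X g : MvPolynomial G F)))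
    (MvPolynomial.prod_C_add_X_eq_sum_esymm F G)
  rw [Polynomial.eval_prod] at hV
  simp only [Polynomial.eval_add, Polynomial.eval_X, Polynomial.eval_C] at hV
  rw [Finset.prod_eq_zero (Finset.mem_univ g) (by ring)] at hV
  rw [Polynomial.eval_finset_sum] at hV
  simp only [Polynomial.eval_mul, Polynomial.eval_pow, Polynomial.eval_X,
    Polynomial.eval_C] at hV
  rw [Finset.sum_range_succ'] at hV
  have h0 : esymm G F 0 * (-(X g : MvPolynomial G F)) ^ (n - 0) = (-(X g)) ^ n := by
    rw [esymm_zero, one_mul, Nat.sub_zero]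
  rw [h0] at hV
  have hneg : ((-(X g : MvPolynomial G F)) ^ n)
      = -∑ j ∈ Finset.range n, esymm G F (j + 1) * (-(X g : MvPolynomial G F)) ^ (n - (j + 1)) := by
    linear_combination hV.symm
  have hmem : ((-(X g : MvPolynomial G F)) ^ n) ∈ hilbertIdeal (regRep F G) := by
    rw [hneg]
    apply neg_mem
    apply Ideal.sum_mem
    intro j _
    exact Ideal.mul_mem_right _ _ (esymm_mem (j + 1) (Nat.succ_pos j))
  rcases Nat.even_or_odd n with he | ho
  · rwa [he.neg_pow] at hmem
  · rw [ho.neg_pow] at hmem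
    simpa using neg_mem hmem

lemma degree_fintype {κ : Type*} [Fintype κ] (ν : κ →₀ ℕ) :
    ν.degree = ∑ x : κ, ν x :=
  Finset.sum_subset (Finset.subset_univ _)
    (fun x _ hx => Finsupp.notMem_support_iff.mp hx)

lemma monomial_mem_reg (μ : G →₀ ℕ) (c : F)
    (h : Fintype.card G * (Fintype.card G - 1) < μ.degree) :
    (monomial μ c : MvPolynomial G F) ∈ hilbertIdeal (regRep F G) := by
  set n := Fintype.card G with hn
  obtain ⟨g, hg⟩ : ∃ g : G, n ≤ μ g := by
    by_contra hcon
    push_neg at hcon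
    have : μ.degree ≤ n * (n - 1) := by
      rw [degree_fintype]
      calc ∑ x : G, μ x ≤ (Finset.univ : Finset G).card * (n - 1) := by
            apply Finset.sum_le_card_nsmul
            intro x _
            exact Nat.le_sub_one_of_lt (hcon x)
        _ = n * (n - 1) := by rw [Finset.card_univ]
    omega
  have hle : Finsupp.single g n ≤ μ := Finsupp.single_le_iff.mpr hg
  have hsplit : (monomial μ c : MvPolynomial G F)
      = monomial (μ - Finsupp.single g n) c * (X g) ^ n := by
    rw [X_pow_eq_monomial, monomial_mul, mul_one, tsub_add_cancel_of_le hle]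
  rw [hsplit]
  exact Ideal.mul_mem_left _ _ (X_pow_card_mem g)

lemma homog_mem_reg {f : MvPolynomial G F} {d : ℕ} (hf : f.IsHomogeneous d)
    (hd : Fintype.card G * (Fintype.card G - 1) < d) :
    f ∈ hilbertIdeal (regRep F G) := by
  rw [f.as_sum]
  apply Ideal.sum_mem
  intro μ hμ
  apply monomial_mem_reg
  have hc := hf (MvPolynomial.mem_support_iff.mp hμ)
  have : μ.degree = d := by rw [Finsupp.degree_eq_weight_one]; exact hc
  omega

lemma homog_mem_reg_topDeg {f : MvPolynomial G F} {d : ℕ} (hf : f.IsHomogeneous d)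
    (hd : topDeg (regRep F G) < d) :
    f ∈ hilbertIdeal (regRep F G) := by
  by_contra hnmem
  have hub : Fintype.card G * (Fintype.card G - 1) ∈ upperBounds
      {d : ℕ | ∃ f : MvPolynomial G F, f.IsHomogeneous d ∧ f ∉ hilbertIdeal (regRep F G)} := by
    rintro e ⟨p, hp, hpn⟩
    by_contra hcon
    push_neg at hcon
    exact hpn (homog_mem_reg hp hcon)
  have hdmem : d ∈ {d : ℕ | ∃ f : MvPolynomial G F, f.IsHomogeneous d ∧
      f ∉ hilbertIdeal (regRep F G)} := ⟨f, hf, hnmem⟩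
  have : d ≤ topDeg (regRep F G) := le_csSup ⟨_, hub⟩ hdmem
  omega

end AuxReg
section AuxTransfer

variable {F G ι : Type*} [Field F] [Group G] [Fintype ι] [DecidableEq ι]

/-- An equivariant algebra homomorphism sending variables to homogeneous linear
polynomials maps the Hilbert ideal into the Hilbert ideal. -/
lemma map_hilbertIdeal {κ : Type*} [Fintype κ] [DecidableEq κ]
    (ρ' : G →* (Matrix κ κ F)ˣ) (ρ : G →* (Matrix ι ι F)ˣ)
    (T : MvPolynomial κ F →ₐ[F] MvPolynomial ι F)
    (hhomog : ∀ i, (T (X i)).IsHomogeneous 1)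
    (hequiv : ∀ (σ : G) (f : MvPolynomial κ F), polyAct ρ σ (T f) = T (polyAct ρ' σ f))
    {f : MvPolynomial κ F} (hf : f ∈ hilbertIdeal ρ') :
    T f ∈ hilbertIdeal ρ := by
  have hmap : T f ∈ Ideal.map (T : MvPolynomial κ F →+* MvPolynomial ι F)
      (hilbertIdeal ρ') := Ideal.mem_map_of_mem _ hf
  rw [hilbertIdeal, Ideal.map_span] at hmap
  refine Ideal.span_mono ?_ hmap
  rintro y ⟨x, ⟨⟨d, hd0, hdh⟩, hinv⟩, rfl⟩
  refine ⟨⟨d, hd0, ?_⟩, fun σ => ?_⟩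
  · have hTx : T x = MvPolynomial.aeval (⇑T ∘ X) x :=
      DFunLike.congr_fun (MvPolynomial.aeval_unique T) x
    show (T x).IsHomogeneous d
    rw [hTx]
    simpa using hdh.aeval (⇑T ∘ X) (fun i => hhomog i)
  · show polyAct ρ σ (T x) = T x
    rw [hequiv σ x, hinv σ]

end AuxTransfer

section AuxW

variable (F G ι : Type*) [Field F] [Group G] [Fintype G] [DecidableEq G]
  [Fintype ι] [DecidableEq ι]

/-- The permutation action of `G` on `G × ι`, acting by left translation on the
first factor: `card ι` copies of the regular permutation action. -/
noncomputable def permW : G →* Equiv.Perm (G × ι) where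
  toFun σ := Equiv.prodCongr (Equiv.mulLeft σ) (Equiv.refl ι)
  map_one' := by
    apply Equiv.ext
    rintro ⟨g, i⟩
    simp
  map_mul' σ τ := by
    apply Equiv.ext
    rintro ⟨g, i⟩
    simp [mul_assoc]

/-- `card ι` copies of the regular representation, on variables `G × ι`. -/
noncomputable def rhoW : G →* (Matrix (G × ι) (G × ι) F)ˣ :=
  (permGL F).comp (permW G ι)

variable {F G ι}

lemma permW_apply (σ g : G) (i : ι) : permW G ι σ (g, i) = (σ * g, i) := rfl

lemma polyAct_rhoW (σ : G) (f : MvPolynomial (G × ι) F) :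
    polyAct (rhoW F G ι) σ f = rename (permW G ι σ) f :=
  polyAct_perm (permW G ι) σ f

/-- The block inclusion of the regular-representation variables. -/
lemma block_equivariant (i : ι) (σ : G) (f : MvPolynomial G F) :
    polyAct (rhoW F G ι) σ (rename (fun g => (g, i)) f)
      = rename (fun g => (g, i)) (polyAct (regRep F G) σ f) := by
  rw [polyAct_rhoW, polyAct_regRep, rename_rename, rename_rename]
  congr 1

lemma block_maps_hilbert (i : ι) {f : MvPolynomial G F}
    (hf : f ∈ hilbertIdeal (regRep F G)) :
    rename (fun g => (g, i)) f ∈ hilbertIdeal (rhoW F G ι) := by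
  refine map_hilbertIdeal (regRep F G) (rhoW F G ι)
    (rename (fun g => (g, i))) (fun g => ?_) (fun σ p => ?_) hf
  · rw [rename_X]; exact isHomogeneous_X F _
  · exact block_equivariant i σ p

end AuxW
section AuxMain

variable {F G ι : Type*} [Field F] [Group G] [Fintype G] [DecidableEq G]
  [Fintype ι] [DecidableEq ι]

lemma monomial_mem_W (μ : (G × ι) →₀ ℕ) (c : F)
    (h : Fintype.card ι * topDeg (regRep F G) < μ.degree) :
    (monomial μ c : MvPolynomial (G × ι) F) ∈ hilbertIdeal (rhoW F G ι) := by
  set t := topDeg (regRep F G) with ht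
  have hdeg : μ.degree = ∑ i : ι, ∑ g : G, μ (g, i) := by
    rw [degree_fintype, Fintype.sum_prod_type]
    exact Finset.sum_comm
  obtain ⟨i, hi⟩ : ∃ i : ι, t < ∑ g : G, μ (g, i) := by
    by_contra hcon
    push_neg at hcon
    have : μ.degree ≤ Fintype.card ι * t := by
      rw [hdeg]
      calc ∑ i : ι, ∑ g : G, μ (g, i) ≤ (Finset.univ : Finset ι).card * t :=
            Finset.sum_le_card_nsmul _ _ _ (fun i _ => hcon i)
        _ = Fintype.card ι * t := by rw [Finset.card_univ]
    omega
  set ν : G →₀ ℕ := Finsupp.equivFunOnFinite.symm (fun g => μ (g, i)) with hν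
  have hνapp : ∀ g : G, ν g = μ (g, i) := fun g => rfl
  have hνdeg : ν.degree = ∑ g : G, μ (g, i) := by
    rw [degree_fintype]
    exact Finset.sum_congr rfl (fun g _ => hνapp g)
  have hblock : (monomial ν (1 : F) : MvPolynomial G F) ∈ hilbertIdeal (regRep F G) := by
    apply homog_mem_reg_topDeg (isHomogeneous_monomial (1 : F) hνdeg)
    exact hi
  have hren := block_maps_hilbert (F := F) i hblock
  rw [rename_monomial] at hren
  set κ : (G × ι) →₀ ℕ := ν.mapDomain (fun g => (g, i)) with hκ
  have hinj : Function.Injective (fun g : G => (g, i)) := fun a b hab => by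
    simpa using congrArg Prod.fst hab
  have hκle : κ ≤ μ := by
    rw [Finsupp.le_def]
    rintro ⟨g, j⟩
    by_cases hji : j = i
    · subst hji
      rw [hκ, Finsupp.mapDomain_apply hinj]
      exact le_of_eq (hνapp g)
    · have : (g, j) ∉ Set.range (fun g : G => (g, i)) := by
        rintro ⟨g', hg'⟩
        exact hji (congrArg Prod.snd hg').symm
      rw [hκ, Finsupp.mapDomain_notin_range _ _ this]
      exact Nat.zero_le _
  have hsplit : (monomial μ c : MvPolynomial (G × ι) F)
      = monomial (μ - κ) c * monomial κ 1 := by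
    rw [monomial_mul, mul_one, tsub_add_cancel_of_le hκle]
  rw [hsplit]
  exact Ideal.mul_mem_left _ _ hren

lemma homog_mem_W {f : MvPolynomial (G × ι) F} {d : ℕ} (hf : f.IsHomogeneous d)
    (hd : Fintype.card ι * topDeg (regRep F G) < d) :
    f ∈ hilbertIdeal (rhoW F G ι) := by
  rw [f.as_sum]
  apply Ideal.sum_mem
  intro μ hμ
  apply monomial_mem_W
  have hc := hf (MvPolynomial.mem_support_iff.mp hμ)
  have : μ.degree = d := by rw [Finsupp.degree_eq_weight_one]; exact hc
  omega

/-- The "restriction" homomorphism `F[V_reg^{card ι}] → F[V]` dual to the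
equivariant embedding `V ↪ V_reg^{card ι}`, `v ↦ (g ↦ ρ(g)⁻¹ v)`. -/
noncomputable def resHom (ρ : G →* (Matrix ι ι F)ˣ) :
    MvPolynomial (G × ι) F →ₐ[F] MvPolynomial ι F :=
  MvPolynomial.aeval (fun p : G × ι => polyAct ρ p.1 (X p.2))

lemma resHom_X (ρ : G →* (Matrix ι ι F)ˣ) (g : G) (i : ι) :
    resHom ρ (X (g, i)) = polyAct ρ g (X i) :=
  aeval_X _ _

lemma resHom_X_homog (ρ : G →* (Matrix ι ι F)ˣ) (p : G × ι) :
    (resHom ρ (X p)).IsHomogeneous 1 := by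
  obtain ⟨g, i⟩ := p
  rw [resHom_X, polyAct_eq_hom, polyActHom_X]
  apply MvPolynomial.IsHomogeneous.sum
  intro j _
  rw [MvPolynomial.smul_eq_C_mul]
  exact (isHomogeneous_X F j).C_mul _

lemma resHom_equivariant (ρ : G →* (Matrix ι ι F)ˣ) (σ : G) (f : MvPolynomial (G × ι) F) :
    polyAct ρ σ (resHom ρ f) = resHom ρ (polyAct (rhoW F G ι) σ f) := by
  have hcomp : (polyActHom ρ σ).comp (resHom ρ)
      = (resHom ρ).comp (polyActHom (rhoW F G ι) σ) := by
    apply algHom_ext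
    rintro ⟨g, i⟩
    rw [AlgHom.comp_apply, AlgHom.comp_apply, resHom_X]
    rw [← polyAct_eq_hom, ← polyAct_eq_hom, polyAct_polyAct]
    rw [polyAct_rhoW, rename_X, permW_apply, resHom_X]
  have := DFunLike.congr_fun hcomp f
  rw [AlgHom.comp_apply, AlgHom.comp_apply] at this
  rw [polyAct_eq_hom, this, ← polyAct_eq_hom]

lemma resHom_section (ρ : G →* (Matrix ι ι F)ˣ) (f : MvPolynomial ι F) :
    resHom ρ (rename (fun i : ι => ((1 : G), i)) f) = f := by
  have hcomp : (resHom ρ).comp (rename (fun i : ι => ((1 : G), i)))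
      = AlgHom.id F (MvPolynomial ι F) := by
    apply algHom_ext
    intro i
    rw [AlgHom.comp_apply, rename_X, resHom_X, polyAct_one, AlgHom.id_apply]
  exact DFunLike.congr_fun hcomp f

end AuxMain

/-- For any `G`-module `V`,
`topdeg F[V]_G ≤ (dim_F V) · topdeg F[V_reg]_G` where `V_reg = FG` is the
regular representation. -/
theorem topDeg_le_dim_mul_topDeg_reg [Fintype G] [DecidableEq G]
    (ρ : G →* (Matrix ι ι F)ˣ) :
    topDeg ρ ≤ Fintype.card ι * topDeg (regRep F G) := by
  apply csSup_le'
  rintro d ⟨f, hf, hfn⟩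
  by_contra hlt
  push_neg at hlt
  apply hfn
  rw [← resHom_section ρ f]
  refine map_hilbertIdeal (rhoW F G ι) ρ (resHom ρ) (resHom_X_homog ρ)
    (fun σ p => resHom_equivariant ρ σ p) ?_
  exact homog_mem_W (MvPolynomial.IsHomogeneous.rename_isHomogeneous hf) hlt
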